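/- If R : ℝ → SO(3) and R̂ : ℝ → SO(3) satisfy R' = R ω_× and R̂' = R̂ (ω + σ)_× for ω, σ : ℝ → ℝ³, then R̄ := R R̂ᵀ satisfies R̄' = −(Rσ)_× R̄, where u_× denotes the skew-symmetric matrix with u_× w = u × w. -/

import Mathlib

open Matrix

attribute [local instance] Matrix.frobeniusNormedAddCommGroup Matrix.frobeniusNormedSpace
attribute [local instance] Matrix.frobeniusNormedRing Matrix.frobeniusNormedAlgebra

noncomputable section

def cross3 (u v : Fin 3 → ℝ) : Fin 3 → ℝ :=
  ![u 1 * v 2 - u 2 * v 1, u 2 * v 0 - u 0 * v 2, u 0 * v 1 - u 1 * v 0]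

/-- The skew-symmetric matrix `u_×` associated with the cross product. -/
def skew3 (u : Fin 3 → ℝ) : Matrix (Fin 3) (Fin 3) ℝ :=
  !![0, -u 2, u 1; u 2, 0, -u 0; -u 1, u 0, 0]

lemma skew3_mulVec (u w : Fin 3 → ℝ) : (skew3 u).mulVec w = cross3 u w := by
  ext i
  fin_cases i <;>
    simp [skew3, cross3, mulVec, dotProduct, Fin.sum_univ_three] <;> ring

lemma skew3_conj (A : Matrix (Fin 3) (Fin 3) ℝ) (u : Fin 3 → ℝ) :
    A * skew3 u * Aᵀ = skew3 ((adjugate Aᵀ).mulVec u) := by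
  have h := adjugate_fin_three Aᵀ
  ext i j
  fin_cases i <;> fin_cases j <;>
    simp [skew3, h, Matrix.mul_apply, mulVec, dotProduct, Fin.sum_univ_three,
      Matrix.transpose_apply] <;> ring

lemma adjugate_transpose_eq (A : Matrix (Fin 3) (Fin 3) ℝ)
    (hA : A ∈ Matrix.specialOrthogonalGroup (Fin 3) ℝ) : adjugate Aᵀ = A := by
  obtain ⟨ho, hd⟩ := Matrix.mem_specialOrthogonalGroup_iff.mp hA
  have h1 : A * Aᵀ = 1 := by
    have := Matrix.mem_unitaryGroup_iff.mp ho
    simpa [Matrix.star_eq_conjTranspose, Matrix.conjTranspose_eq_transpose_of_trivial] using this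
  have h2 : Aᵀ * adjugate Aᵀ = 1 := by
    rw [Matrix.mul_adjugate, Matrix.det_transpose, hd, one_smul]
  calc adjugate Aᵀ = (A * Aᵀ) * adjugate Aᵀ := by rw [h1, one_mul]
    _ = A * (Aᵀ * adjugate Aᵀ) := by rw [Matrix.mul_assoc]
    _ = A := by rw [h2, mul_one]

lemma skew3_add (u v : Fin 3 → ℝ) : skew3 (u + v) = skew3 u + skew3 v := by
  ext i j; fin_cases i <;> fin_cases j <;> simp [skew3] <;> ring

lemma skew3_transpose (u : Fin 3 → ℝ) : (skew3 u)ᵀ = -skew3 u := by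
  ext i j; fin_cases i <;> fin_cases j <;> simp [skew3]


set_option maxHeartbeats 1000000 in
/-- if `R' = R ω_×` and `R̂' = R̂ (ω + σ)_×` on `SO(3)`, then
`R̄ = R R̂ᵀ` satisfies `R̄' = −(Rσ)_× R̄`, where `u_× w = u × w`. -/
theorem stmt_19 (R Rhat : ℝ → Matrix (Fin 3) (Fin 3) ℝ)
    (ω σ : ℝ → Fin 3 → ℝ) (hωc : Continuous ω) (hσc : Continuous σ)
    (hRSO : ∀ t, R t ∈ Matrix.specialOrthogonalGroup (Fin 3) ℝ)
    (hRhatSO : ∀ t, Rhat t ∈ Matrix.specialOrthogonalGroup (Fin 3) ℝ)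
    (hR : ∀ t, HasDerivAt R (R t * skew3 (ω t)) t)
    (hRhat : ∀ t, HasDerivAt Rhat (Rhat t * skew3 (ω t + σ t)) t) :
    (∀ u w : Fin 3 → ℝ, (skew3 u).mulVec w = cross3 u w) ∧
    ∀ t, HasDerivAt (fun s => R s * (Rhat s)ᵀ)
      (-(skew3 ((R t).mulVec (σ t))) * (R t * (Rhat t)ᵀ)) t := by
  refine ⟨skew3_mulVec, fun t => ?_⟩
  -- transpose as a continuous linear map
  let T : Matrix (Fin 3) (Fin 3) ℝ →L[ℝ] Matrix (Fin 3) (Fin 3) ℝ :=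
    LinearMap.toContinuousLinearMap
      (Matrix.transposeLinearEquiv (Fin 3) (Fin 3) ℝ ℝ).toLinearMap
  have hT : HasDerivAt (fun s => (Rhat s)ᵀ) ((Rhat t * skew3 (ω t + σ t))ᵀ) t :=
    (T.hasFDerivAt.comp_hasDerivAt t (hRhat t))
  have key := (hR t).mul hT
  convert key using 1
  case e'_4 => rfl
  case e'_5 => rfl
  case e'_6 => rfl
  case e'_8 => rfl
  have hRtR : (R t)ᵀ * R t = 1 := by
    have := Matrix.mem_unitaryGroup_iff'.mp (hRSO t).1
    simpa [Matrix.star_eq_conjTranspose, Matrix.conjTranspose_eq_transpose_of_trivial] using this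
  have hskew : skew3 ((R t).mulVec (σ t)) = R t * skew3 (σ t) * (R t)ᵀ := by
    have h := skew3_conj (R t) (σ t)
    rw [adjugate_transpose_eq (R t) (hRSO t)] at h
    exact h.symm
  rw [hskew, Matrix.transpose_mul, skew3_transpose, skew3_add]
  have : -(R t * skew3 (σ t) * (R t)ᵀ) * (R t * (Rhat t)ᵀ)
      = -(R t * skew3 (σ t) * (((R t)ᵀ * R t) * (Rhat t)ᵀ)) := by
    noncomm_ring
  rw [this, hRtR, one_mul]
  noncomm_ring
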